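/- Let L be a family of complete t-partite graphs with vertex sets contained in [n] whose edge sets together cover all edges of the complete graph K_n. Then Σ_{x∈[n]} t^{-μ(x)} ≤ 1, where μ(x) is the number of graphs in L whose vertex set contains x. -/

import Mathlib

open Classical Finset Real
open scoped Classical

noncomputable section

/-- A monotone partial function from `P` to the `t`-element chain,
encoded as a function into `Option (Fin t)` (`none` = outside the domain). -/
def MonotonePartial {P : Type*} [PartialOrder P] {t : ℕ} (f : P → Option (Fin t)) : Prop :=
  ∀ ⦃x y : P⦄, x ≤ y → ∀ ⦃a b : Fin t⦄, f x = some a → f y = some b → a ≤ b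

/-- `f` separates the pair `(x, y)`: both are in the domain and `f x < f y`. -/
def Separates {P : Type*} {t : ℕ} (f : P → Option (Fin t)) (x y : P) : Prop :=
  ∃ a b : Fin t, f x = some a ∧ f y = some b ∧ a < b

/-- A local `t`-realiser: a set of monotone partial functions into the `t`-chain
separating every pair `x ≱ y`. -/
def IsLocalRealiser {P : Type*} [PartialOrder P] {t : ℕ}
    (L : Finset (P → Option (Fin t))) : Prop :=
  (∀ f ∈ L, MonotonePartial f) ∧ ∀ x y : P, ¬ y ≤ x → ∃ f ∈ L, Separates f x y

/-- The multiplicity of `x` in `L`: the number of members of `L` whose domain contains `x`. -/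
def mult {P : Type*} {t : ℕ} (L : Finset (P → Option (Fin t))) (x : P) : ℕ :=
  (L.filter fun f => (f x).isSome).card

/-- The local `t`-dimension: minimal possible maximum multiplicity of a local `t`-realiser. -/
def ltdim (t : ℕ) (P : Type*) [PartialOrder P] : ℕ :=
  sInf {d | ∃ L : Finset (P → Option (Fin t)), IsLocalRealiser L ∧ ∀ x, mult L x ≤ d}

/-- a family of complete `t`-partite graphs covering `K_n`
(each graph encoded by its partial `t`-colouring `c : Fin n → Option (Fin t)`;
vertex set = domain of `c`, edges = pairs of the domain with distinct colours)
satisfies `∑_x t^(-μ(x)) ≤ 1`. -/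
theorem hansel_tpartite (n t : ℕ) (ht : 2 ≤ t) (L : Finset (Fin n → Option (Fin t)))
    (hcov : ∀ x y : Fin n, x ≠ y → ∃ c ∈ L, ∃ a b : Fin t,
      c x = some a ∧ c y = some b ∧ a ≠ b) :
    ∑ x : Fin n, (t : ℝ) ^ (-(mult L x : ℤ)) ≤ 1 := by
  classical
  set N := L.card with hN
  have hμ : ∀ x, mult L x ≤ N := fun x => Finset.card_filter_le _ _
  have ht0 : (0:ℝ) < t := by exact_mod_cast (by omega : 0 < t)
  -- the space of colour choices
  let Ω := ({f // f ∈ L} → Fin t)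
  have hΩ : Fintype.card Ω = t ^ N := by
    simp [Ω, Fintype.card_fun, Fintype.card_coe, hN]
  -- A x : choices consistent with x everywhere
  let A : Fin n → Finset Ω := fun x =>
    Finset.univ.filter (fun σ => ∀ c : {f // f ∈ L}, ∀ a : Fin t, c.1 x = some a → σ c = a)
  have hcard : ∀ x, (A x).card = t ^ (N - mult L x) := by
    intro x
    have hfilt : (L.filter fun f => f x = none).card = N - mult L x := by
      have h1 := Finset.card_filter_add_card_filter_not
        (s := L) (p := fun f => (f x).isSome)
      have h2 : (L.filter fun f => ¬ (f x).isSome) = L.filter fun f => f x = none := by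
        apply Finset.filter_congr; intro f _; simp [Option.not_isSome_iff_eq_none]
      rw [h2] at h1
      have h3 : mult L x = (L.filter fun f => (f x).isSome).card := rfl
      rw [← h3] at h1
      exact Nat.eq_sub_of_add_eq (by rw [Nat.add_comm]; exact h1)
    have hbij : (A x).card =
        (Finset.univ : Finset ({f // f ∈ L.filter fun f => f x = none} → Fin t)).card := by
      refine Finset.card_nbij'
        (fun σ => fun c => σ ⟨c.1, (Finset.mem_filter.mp c.2).1⟩)
        (fun g => fun c => if h : (c.1 x).isSome then (c.1 x).get h else
          g ⟨c.1, Finset.mem_filter.mpr ⟨c.2, Option.not_isSome_iff_eq_none.mp h⟩⟩)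
        (fun σ _ => Finset.mem_univ _) ?_ ?_ ?_
      · intro g _
        simp only [A, Finset.mem_coe, Finset.mem_filter, Finset.mem_univ, true_and]
        intro c a hca
        have h : (c.1 x).isSome := by rw [hca]; rfl
        rw [dif_pos h]
        have : some ((c.1 x).get h) = some a := by rw [Option.some_get, hca]
        exact Option.some.inj this
      · intro σ hσ
        have hσ' := (Finset.mem_filter.mp hσ).2
        funext c
        dsimp only
        by_cases h : (c.1 x).isSome
        · rw [dif_pos h]
          exact (hσ' c _ (Option.eq_some_of_isSome h)).symm
        · rw [dif_neg h]
      · intro g _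
        funext c
        dsimp only
        have hc := (Finset.mem_filter.mp c.2).2
        have h : ¬ (c.1 x).isSome := by simp [hc]
        rw [dif_neg h]
    rw [hbij, Finset.card_univ, Fintype.card_fun, Fintype.card_coe, hfilt, Fintype.card_fin]
  -- disjointness
  have hdisj : ∀ x y : Fin n, x ≠ y → Disjoint (A x) (A y) := by
    intro x y hxy
    rw [Finset.disjoint_left]
    intro σ hσx hσy
    obtain ⟨c, hc, a, b, hca, hcb, hab⟩ := hcov x y hxy
    have h1 := (Finset.mem_filter.mp hσx).2 ⟨c, hc⟩ a hca
    have h2 := (Finset.mem_filter.mp hσy).2 ⟨c, hc⟩ b hcb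
    exact hab (h1 ▸ h2 ▸ rfl)
  -- counting bound
  have hsum : ∑ x : Fin n, t ^ (N - mult L x) ≤ t ^ N := by
    calc ∑ x : Fin n, t ^ (N - mult L x) = ∑ x : Fin n, (A x).card := by
          simp [hcard]
      _ = (Finset.univ.biUnion A).card :=
          (Finset.card_biUnion (fun x _ y _ h => hdisj x y h)).symm
      _ ≤ Fintype.card Ω := Finset.card_le_univ _
      _ = t ^ N := hΩ
  -- conclude in ℝ
  have hterm : ∀ x : Fin n, (t:ℝ) ^ (-(mult L x : ℤ)) =
      (t:ℝ) ^ (N - mult L x) / (t:ℝ) ^ N := by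
    intro x
    rw [eq_div_iff (by positivity)]
    rw [← zpow_natCast ((t:ℝ)) (N - mult L x), ← zpow_natCast ((t:ℝ)) N,
      ← zpow_add₀ (ne_of_gt ht0)]
    congr 1
    have := hμ x
    omega
  calc ∑ x : Fin n, (t:ℝ) ^ (-(mult L x : ℤ))
      = (∑ x : Fin n, (t:ℝ) ^ (N - mult L x)) / (t:ℝ) ^ N := by
        rw [Finset.sum_div]; exact Finset.sum_congr rfl fun x _ => hterm x
    _ ≤ 1 := by
        rw [div_le_one (by positivity)]
        exact_mod_cast hsum
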